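/- Let ⟨·,·⟩₁ be a nondegenerate symmetric bilinear form of signature (−,+,…,+) on a finite-dimensional real vector space V with norm ‖·‖, and let 𝔗 be the closed cone of future-pointing causal vectors. Then there exists a constant C < ∞ such that −⟨v,v⟩₁ ≤ C ‖v‖ dist(v, ∂𝔗) for all v ∈ 𝔗. -/

import Mathlib

set_option maxHeartbeats 1000000 in
theorem stmt_6 (V : Type*) [NormedAddCommGroup V] [NormedSpace ℝ V]
    [FiniteDimensional ℝ V] (B : LinearMap.BilinForm ℝ V)
    (hsymm : ∀ x y : V, B x y = B y x)
    (e : V) (he : B e e < 0)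
    (hpos : ∀ v : V, B e v = 0 → v ≠ 0 → 0 < B v v) :
    ∃ C : ℝ, ∀ v ∈ {v : V | B v v ≤ 0 ∧ B v e ≤ 0},
      -B v v ≤ C * ‖v‖ * Metric.infDist v (frontier {v : V | B v v ≤ 0 ∧ B v e ≤ 0}) := by
  classical
  set S : Set V := {v : V | B v v ≤ 0 ∧ B v e ≤ 0} with hSdef
  -- a bound for the bilinear form
  obtain ⟨M, hMpos, hMb⟩ : ∃ M : ℝ, 0 < M ∧ ∀ x y : V, |B x y| ≤ M * ‖x‖ * ‖y‖ := by
    let Bc : V →L[ℝ] V →L[ℝ] ℝ :=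
      LinearMap.toContinuousLinearMap
        (((LinearMap.toContinuousLinearMap (𝕜 := ℝ) (E := V) (F' := ℝ)) :
            (V →ₗ[ℝ] ℝ) ≃ₗ[ℝ] (V →L[ℝ] ℝ)).toLinearMap.comp B)
    have hBc : ∀ x y : V, Bc x y = B x y := by intro x y; rfl
    refine ⟨‖Bc‖ + 1, by positivity, fun x y => ?_⟩
    rw [← hBc, ← Real.norm_eq_abs]
    calc ‖Bc x y‖ ≤ ‖Bc x‖ * ‖y‖ := (Bc x).le_opNorm y
      _ ≤ (‖Bc‖ * ‖x‖) * ‖y‖ :=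
        mul_le_mul_of_nonneg_right (Bc.le_opNorm x) (norm_nonneg y)
      _ ≤ (‖Bc‖ + 1) * ‖x‖ * ‖y‖ := by
        have := norm_nonneg x
        have := norm_nonneg y
        nlinarith
  have hM0 : 0 ≤ M := hMpos.le
  have he0 : e ≠ 0 := by
    intro h; rw [h] at he; simp at he
  have hne : 0 < ‖e‖ := norm_pos_iff.mpr he0
  -- continuity of the quadratic and linear pieces
  have hQcont : Continuous fun v : V => B v v := by
    let Bc : V →L[ℝ] V →L[ℝ] ℝ :=
      LinearMap.toContinuousLinearMap
        (((LinearMap.toContinuousLinearMap (𝕜 := ℝ) (E := V) (F' := ℝ)) :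
            (V →ₗ[ℝ] ℝ) ≃ₗ[ℝ] (V →L[ℝ] ℝ)).toLinearMap.comp B)
    exact Bc.continuous₂.comp (continuous_id.prodMk continuous_id)
  have hLcont : Continuous fun v : V => B v e :=
    (LinearMap.toContinuousLinearMap (B.flip e)).continuous
  have hSclosed : IsClosed S := by
    have : S = {v : V | B v v ≤ 0} ∩ {v : V | B v e ≤ 0} := rfl
    rw [this]
    exact (isClosed_le hQcont continuous_const).inter
      (isClosed_le hLcont continuous_const)
  -- compactness of the cone on the unit sphere
  set K : Set V := S ∩ Metric.sphere (0 : V) 1 with hKdef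
  have hu0 : ‖e‖⁻¹ • e ∈ K := by
    have h1 : 0 ≤ ‖e‖⁻¹ := inv_nonneg.mpr (norm_nonneg e)
    refine ⟨⟨?_, ?_⟩, ?_⟩
    · have hx : B (‖e‖⁻¹ • e) (‖e‖⁻¹ • e) = ‖e‖⁻¹ * (‖e‖⁻¹ * B e e) := by
        simp [map_smul, smul_eq_mul]
      rw [hx]
      exact mul_nonpos_of_nonneg_of_nonpos h1
        (mul_nonpos_of_nonneg_of_nonpos h1 he.le)
    · have hx : B (‖e‖⁻¹ • e) e = ‖e‖⁻¹ * B e e := by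
        simp [map_smul, smul_eq_mul]
      rw [hx]
      exact mul_nonpos_of_nonneg_of_nonpos h1 he.le
    · rw [mem_sphere_zero_iff_norm, norm_smul, norm_inv, norm_norm,
        inv_mul_cancel₀ hne.ne']
  have hKcomp : IsCompact K :=
    Metric.isCompact_of_isClosed_isBounded
      (hSclosed.inter Metric.isClosed_sphere)
      (Metric.isBounded_sphere.subset Set.inter_subset_right)
  obtain ⟨z, hzK, hzmax⟩ := hKcomp.exists_isMaxOn ⟨_, hu0⟩ hLcont.continuousOn
  set δ : ℝ := -B z e with hδdef
  have hz1 : ‖z‖ = 1 := mem_sphere_zero_iff_norm.mp hzK.2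
  have hzne : z ≠ 0 := by
    intro h; rw [h] at hz1; simp at hz1
  have hδpos : 0 < δ := by
    rcases lt_or_eq_of_le hzK.1.2 with h | h
    · simpa [hδdef] using h
    · exfalso
      have := hpos z (by rw [hsymm e z]; exact h) hzne
      exact absurd hzK.1.1 (not_le.mpr this)
  -- the linear functional bound on S
  have hLbound : ∀ v ∈ S, B v e ≤ -(δ * ‖v‖) := by
    intro v hv
    rcases eq_or_ne v 0 with rfl | hv0
    · simp
    · have hnv : 0 < ‖v‖ := norm_pos_iff.mpr hv0
      have hinv : 0 ≤ ‖v‖⁻¹ := inv_nonneg.mpr (norm_nonneg v)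
      have huK : ‖v‖⁻¹ • v ∈ K := by
        refine ⟨⟨?_, ?_⟩, ?_⟩
        · have hx : B (‖v‖⁻¹ • v) (‖v‖⁻¹ • v) = ‖v‖⁻¹ * (‖v‖⁻¹ * B v v) := by
            simp [map_smul, smul_eq_mul]
          rw [hx]
          exact mul_nonpos_of_nonneg_of_nonpos hinv
            (mul_nonpos_of_nonneg_of_nonpos hinv hv.1)
        · have hx : B (‖v‖⁻¹ • v) e = ‖v‖⁻¹ * B v e := by
            simp [map_smul, smul_eq_mul]
          rw [hx]
          exact mul_nonpos_of_nonneg_of_nonpos hinv hv.2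
        · rw [mem_sphere_zero_iff_norm, norm_smul, norm_inv, norm_norm,
            inv_mul_cancel₀ hnv.ne']
      have hle : B (‖v‖⁻¹ • v) e ≤ -δ := by
        have := hzmax huK
        simpa [hδdef] using this
      have hexp : B (‖v‖⁻¹ • v) e = ‖v‖⁻¹ * B v e := by
        simp [map_smul, smul_eq_mul]
      rw [hexp] at hle
      have := mul_le_mul_of_nonneg_left hle (norm_nonneg v)
      rw [← mul_assoc, mul_inv_cancel₀ hnv.ne', one_mul] at this
      nlinarith
  -- the constant
  set C : ℝ := max (3 * M) (M * M * ‖e‖ / δ) with hCdef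
  have hC3 : 3 * M ≤ C := le_max_left _ _
  have hC2 : M * M * ‖e‖ ≤ C * δ := by
    have h1 : M * M * ‖e‖ / δ ≤ C := le_max_right _ _
    calc M * M * ‖e‖ = M * M * ‖e‖ / δ * δ := by field_simp
      _ ≤ C * δ := mul_le_mul_of_nonneg_right h1 hδpos.le
  have hCpos : 0 < C := lt_of_lt_of_le (by nlinarith) hC3
  refine ⟨C, ?_⟩
  intro v hv
  rcases le_or_gt (-B v v) 0 with hneg | hneg
  · exact hneg.trans
      (mul_nonneg (mul_nonneg hCpos.le (norm_nonneg v)) Metric.infDist_nonneg)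
  have hv0 : v ≠ 0 := by
    intro h; rw [h] at hneg; simp at hneg
  have hnv : 0 < ‖v‖ := norm_pos_iff.mpr hv0
  set r : ℝ := -B v v / (C * ‖v‖) with hrdef
  have hrpos : 0 < r := div_pos hneg (by positivity)
  have hCr : C * ‖v‖ * r = -B v v := by
    rw [hrdef]; field_simp
  have hQv : -B v v ≤ M * ‖v‖ * ‖v‖ := (neg_le_abs _).trans (hMb v v)
  have hrM : r * C ≤ M * ‖v‖ := by
    rw [hrdef, div_mul_eq_mul_div, div_le_iff₀ (by positivity)]
    nlinarith
  have hrv : r ≤ ‖v‖ := by nlinarith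
  -- ball of radius r around v is inside S
  have hball : ∀ w : V, dist v w < r → w ∈ S := by
    intro w hw
    set d : V := w - v with hddef
    have hd : ‖d‖ ≤ r := by
      rw [hddef, ← dist_eq_norm']
      exact hw.le
    have hd0 : 0 ≤ ‖d‖ := norm_nonneg d
    have hb1 : B v d ≤ M * ‖v‖ * ‖d‖ := (le_abs_self _).trans (hMb v d)
    have hb2 : B d d ≤ M * ‖d‖ * ‖d‖ := (le_abs_self _).trans (hMb d d)
    have hb3 : B d e ≤ M * ‖d‖ * ‖e‖ := (le_abs_self _).trans (hMb d e)
    have hwv : w = v + d := by rw [hddef]; abel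
    constructor
    · have hexp : B w w = B v v + 2 * B v d + B d d := by
        rw [hwv]
        simp only [map_add, LinearMap.add_apply]
        rw [hsymm d v]; ring
      rw [hexp]
      have s1 : B v d ≤ M * ‖v‖ * r :=
        hb1.trans (mul_le_mul_of_nonneg_left hd (mul_nonneg hM0 hnv.le))
      have s2 : B d d ≤ M * ‖v‖ * r := by
        calc B d d ≤ M * ‖d‖ * ‖d‖ := hb2
          _ ≤ M * r * ‖d‖ :=
            mul_le_mul_of_nonneg_right (mul_le_mul_of_nonneg_left hd hM0) hd0
          _ ≤ M * r * r := mul_le_mul_of_nonneg_left hd (mul_nonneg hM0 hrpos.le)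
          _ ≤ M * ‖v‖ * r :=
            mul_le_mul_of_nonneg_right (mul_le_mul_of_nonneg_left hrv hM0) hrpos.le
      have s3 : 3 * (M * ‖v‖ * r) ≤ C * ‖v‖ * r := by
        nlinarith [hC3, mul_nonneg hnv.le hrpos.le]
      linarith [hCr]
    · have hexp : B w e = B v e + B d e := by
        rw [hwv]; simp [map_add, LinearMap.add_apply]
      rw [hexp]
      have hLv : B v e ≤ -(δ * ‖v‖) := hLbound v hv
      have t1 : B d e ≤ M * r * ‖e‖ := by
        refine hb3.trans ?_
        have := mul_le_mul_of_nonneg_right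
          (mul_le_mul_of_nonneg_left hd hM0) (norm_nonneg e)
        linarith
      have t2 : M * r * ‖e‖ ≤ δ * ‖v‖ := by
        have A := mul_le_mul_of_nonneg_right hrM (mul_nonneg hM0 (norm_nonneg e))
        have Bp := mul_le_mul_of_nonneg_right hC2 hnv.le
        nlinarith [hCpos, hM0, norm_nonneg e, hnv.le, hrpos.le]
      linarith
  -- frontier is nonempty: 0 is a frontier point
  have hfne : (frontier S).Nonempty := by
    refine ⟨0, ?_⟩
    rw [frontier_eq_closure_inter_closure]
    constructor
    · exact subset_closure (by constructor <;> simp)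
    · rw [Metric.mem_closure_iff]
      intro ε hε
      refine ⟨(ε / (2 * ‖e‖)) • (-e), ?_, ?_⟩
      · intro hmem
        have hexp : B ((ε / (2 * ‖e‖)) • (-e)) e = ε / (2 * ‖e‖) * -B e e := by
          simp [map_smul, smul_eq_mul]
        have h1 : 0 < ε / (2 * ‖e‖) := by positivity
        have h2 := hmem.2
        rw [hexp] at h2
        nlinarith
      · rw [dist_comm, dist_zero_right, norm_smul, norm_neg, Real.norm_eq_abs,
          abs_of_pos (by positivity), div_mul_eq_mul_div,
          div_lt_iff₀ (by positivity)]
        nlinarith [hε, hne]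
  -- every frontier point is at distance ≥ r
  have hfr : ∀ y ∈ frontier S, r ≤ dist v y := by
    intro y hy
    by_contra hlt
    push_neg at hlt
    have hyint : y ∈ interior S := by
      apply interior_maximal
        (fun w hw => hball w (by rw [dist_comm]; exact hw)) Metric.isOpen_ball
      rw [Metric.mem_ball, dist_comm]
      exact hlt
    exact hy.2 hyint
  have hinf : r ≤ Metric.infDist v (frontier S) := by
    by_contra hlt
    push_neg at hlt
    obtain ⟨y, hyF, hyd⟩ := (Metric.infDist_lt_iff hfne).mp hlt
    exact absurd hyd (not_lt.mpr (hfr y hyF))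
  calc -B v v = C * ‖v‖ * r := hCr.symm
    _ ≤ C * ‖v‖ * Metric.infDist v (frontier S) :=
      mul_le_mul_of_nonneg_left hinf (by positivity)
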